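/- Let Ω be a quasi-product with connected quasi-factors Λ and Γ, and suppose θ: Ω → Λ × Γ is a k-graph isomorphism. Then θ maps each component Ω₂^x (x ∈ Λ⁰) into {y} × Γ for a single y ∈ Λ⁰, and each component Ω₁^w (w ∈ Γ⁰) into Λ × {z} for a single z ∈ Γ⁰. -/

import Mathlib

/-- An edge-colored directed graph with `k` colors. -/
structure ColoredGraph (k : ℕ) where
  V : Type
  E : Type
  es : E → V
  er : E → V
  color : E → Fin k

namespace ColoredGraph

variable {k k₁ k₂ : ℕ}

/-- A (possibly empty) path in a colored graph: a base (source) vertex together with a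
composable list of edges, listed from the range end (head of the list is the last edge
traversed). -/
structure Pth (G : ColoredGraph k) where
  base : G.V
  edges : List G.E
  chain : edges.Chain' fun e f => G.es e = G.er f
  base_src : ∀ e ∈ edges.getLast?, G.es e = base

namespace Pth

variable {G : ColoredGraph k}

/-- The source of a path. -/
def s (p : G.Pth) : G.V := p.base

/-- The range of a path. -/
def r (p : G.Pth) : G.V := (p.edges.head?.map G.er).getD p.base

/-- The color order of a path. -/
def colors (p : G.Pth) : List (Fin k) := p.edges.map G.color

end Pth

/-- `G.IsComp p q pq` means that `pq` is the composite path "first `q`, then `p`"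
(written `pq = p q` in range-on-the-left notation). -/
def IsComp (G : ColoredGraph k) (p q pq : G.Pth) : Prop :=
  p.s = q.r ∧ pq.base = q.base ∧ pq.edges = p.edges ++ q.edges

/-- A factorization rule on the path category of a colored graph: a source-, range- and
color-order-compatible equivalence relation which respects composition (KG0) and such that
every equivalence class contains exactly one path of each permuted color order (KG4).
The quotient is then a `k`-graph. -/
structure FactRule (G : ColoredGraph k) where
  rel : G.Pth → G.Pth → Prop
  iseqv : Equivalence rel
  s_eq : ∀ p q, rel p q → p.s = q.s
  r_eq : ∀ p q, rel p q → p.r = q.r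
  kg0 : ∀ p p' q q' pq p'q', rel p p' → rel q q' →
    G.IsComp p q pq → G.IsComp p' q' p'q' → rel pq p'q'
  kg4 : ∀ (p : G.Pth) (l : List (Fin k)), l.Perm p.colors →
    ∃! q : G.Pth, rel p q ∧ q.colors = l

/-- The Cartesian (box) product of colored graphs. -/
def prodG (G₁ : ColoredGraph k₁) (G₂ : ColoredGraph k₂) : ColoredGraph (k₁ + k₂) where
  V := G₁.V × G₂.V
  E := G₁.E × G₂.V ⊕ G₁.V × G₂.E
  es e := match e with
    | .inl (e, w) => (G₁.es e, w)
    | .inr (v, f) => (v, G₂.es f)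
  er e := match e with
    | .inl (e, w) => (G₁.er e, w)
    | .inr (v, f) => (v, G₂.er f)
  color e := match e with
    | .inl (e, _) => Fin.castAdd k₂ (G₁.color e)
    | .inr (_, f) => Fin.natAdd k₁ (G₂.color f)

/-- The lift of a path of `G₁` to the slice `G₁ × {w}` of the product graph. -/
def lift₁ {G₁ : ColoredGraph k₁} {G₂ : ColoredGraph k₂} (w : G₂.V) (p : G₁.Pth) :
    (prodG G₁ G₂).Pth where
  base := (p.base, w)
  edges := p.edges.map fun e => Sum.inl (e, w)
  chain := by
    show List.IsChain (fun e f : G₁.E × G₂.V ⊕ G₁.V × G₂.E =>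
      (prodG G₁ G₂).es e = (prodG G₁ G₂).er f) (List.map (fun e => Sum.inl (e, w)) p.edges)
    rw [List.isChain_map]
    refine List.IsChain.imp ?_ p.chain
    intro a b h
    show ((G₁.es a, w) : G₁.V × G₂.V) = (G₁.er b, w)
    rw [h]
  base_src := by
    show ∀ e : G₁.E × G₂.V ⊕ G₁.V × G₂.E, e ∈ (List.map (fun e => Sum.inl (e, w)) p.edges).getLast? →
      (prodG G₁ G₂).es e = (p.base, w)
    intro e he
    rw [Option.mem_def] at he
    rw [List.getLast?_map, Option.map_eq_some_iff] at he
    obtain ⟨a, ha, rfl⟩ := he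
    show ((G₁.es a, w) : G₁.V × G₂.V) = (p.base, w)
    rw [p.base_src a ha]

/-- The lift of a path of `G₂` to the slice `{x} × G₂` of the product graph. -/
def lift₂ {G₁ : ColoredGraph k₁} {G₂ : ColoredGraph k₂} (x : G₁.V) (q : G₂.Pth) :
    (prodG G₁ G₂).Pth where
  base := (x, q.base)
  edges := q.edges.map fun f => Sum.inr (x, f)
  chain := by
    show List.IsChain (fun e f : G₁.E × G₂.V ⊕ G₁.V × G₂.E =>
      (prodG G₁ G₂).es e = (prodG G₁ G₂).er f) (List.map (fun f => Sum.inr (x, f)) q.edges)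
    rw [List.isChain_map]
    refine List.IsChain.imp ?_ q.chain
    intro a b h
    show ((x, G₂.es a) : G₁.V × G₂.V) = (x, G₂.er b)
    rw [h]
  base_src := by
    show ∀ e : G₁.E × G₂.V ⊕ G₁.V × G₂.E, e ∈ (List.map (fun f => Sum.inr (x, f)) q.edges).getLast? →
      (prodG G₁ G₂).es e = (x, q.base)
    intro e he
    rw [Option.mem_def] at he
    rw [List.getLast?_map, Option.map_eq_some_iff] at he
    obtain ⟨a, ha, rfl⟩ := he
    show ((x, G₂.es a) : G₁.V × G₂.V) = (x, q.base)
    rw [q.base_src a ha]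

/-- The underlying undirected graph is connected. -/
def Connected (G : ColoredGraph k) : Prop :=
  ∀ a b : G.V,
    Relation.ReflTransGen
      (fun u v => ∃ e : G.E, (G.es e = u ∧ G.er e = v) ∨ (G.es e = v ∧ G.er e = u)) a b

/-- Row-finiteness at the level of the one-skeleton: for each vertex and color order there
are only finitely many paths into that vertex with that color order. -/
def RowFinite (G : ColoredGraph k) : Prop :=
  ∀ (v : G.V) (l : List (Fin k)), {p : G.Pth | p.r = v ∧ p.colors = l}.Finite

/-- A vertex-fixing automorphism of a colored graph. -/
def VertexFixingAut (G : ColoredGraph k) (F : G.E → G.E) : Prop :=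
  Function.Bijective F ∧
    ∀ e, G.es (F e) = G.es e ∧ G.er (F e) = G.er e ∧ G.color (F e) = G.color e

end ColoredGraph

open ColoredGraph

/-- A quasi-product `(k₁+k₂)`-graph: its one-skeleton is the product of the one-skeletons of
`Λ = (G₁, rLam)` and `Γ = (G₂, rGam)`, i.e. the quasi-product is given by a factorization
rule `rOmega` on the product graph; the quasi-factors embed as the slices at `base₂`
resp. `base₁` (the injective degree-compatible functors `ψ₁, ψ₂`). -/
structure QuasiProduct (k₁ k₂ : ℕ) where
  G₁ : ColoredGraph k₁
  G₂ : ColoredGraph k₂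
  rLam : G₁.FactRule
  rGam : G₂.FactRule
  rOmega : (prodG G₁ G₂).FactRule
  base₁ : G₁.V
  base₂ : G₂.V
  emb₁ : ∀ p q : G₁.Pth, rLam.rel p q ↔ rOmega.rel (lift₁ base₂ p) (lift₁ base₂ q)
  emb₂ : ∀ p q : G₂.Pth, rGam.rel p q ↔ rOmega.rel (lift₂ base₁ p) (lift₂ base₁ q)

variable {k₁ k₂ : ℕ}

/-- `ActsTo R p q q' p'` expresses, for a factorization rule `R` on the product graph, that
the Zappa–Szép actions of the associated matched pair satisfy `p ▷ q = q'` and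
`q ◁ p = p'`; that is, `([p], r q)(s p, [q]) = (r p, [q'])([p'], s q)`, with `q'` and `p'`
of the same color order as `q` and `p`. -/
def ActsTo {G₁ : ColoredGraph k₁} {G₂ : ColoredGraph k₂}
    (R : (prodG G₁ G₂).FactRule) (p : G₁.Pth) (q : G₂.Pth)
    (q' : G₂.Pth) (p' : G₁.Pth) : Prop :=
  ∃ lhs rhs : (prodG G₁ G₂).Pth,
    (prodG G₁ G₂).IsComp (lift₁ q.r p) (lift₂ p.s q) lhs ∧
    (prodG G₁ G₂).IsComp (lift₂ p.r q') (lift₁ q.s p') rhs ∧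
    R.rel lhs rhs ∧ q'.colors = q.colors ∧ p'.colors = p.colors

/-- The quasi-factor `Γ` of a quasi-product is *stable* if the left action is trivial:
`p ▷ q = q` for all paths. -/
def QuasiProduct.Stable (Q : QuasiProduct k₁ k₂) : Prop :=
  ∀ (p : Q.G₁.Pth) (q q' : Q.G₂.Pth) (p' : Q.G₁.Pth),
    ActsTo Q.rOmega p q q' p' → q' = q

/-- The factorization rule of the slice `Ω₁^w`, i.e. the rule induced on `G₁`-paths by the
slice `G₁ × {w}` of the quasi-product. -/
def QuasiProduct.relAt₁ (Q : QuasiProduct k₁ k₂) (w : Q.G₂.V) (p p' : Q.G₁.Pth) : Prop :=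
  Q.rOmega.rel (lift₁ w p) (lift₁ w p')

/-- The factorization rule of the slice `Ω₂^x`. -/
def QuasiProduct.relAt₂ (Q : QuasiProduct k₁ k₂) (x : Q.G₁.V) (q q' : Q.G₂.Pth) : Prop :=
  Q.rOmega.rel (lift₂ x q) (lift₂ x q')

/-- `F` implements a (vertex- and color-preserving) isomorphism from the quotient
`k`-graph `G*/R` to `G*/S`. -/
def RelIsoVia (G : ColoredGraph k) (R S : G.Pth → G.Pth → Prop) (F : G.Pth → G.Pth) :
    Prop :=
  (∀ p, (F p).s = p.s ∧ (F p).r = p.r ∧ (F p).colors = p.colors) ∧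
  (∀ p p', R p p' ↔ S (F p) (F p')) ∧
  (∀ p', ∃ p, S (F p) p') ∧
  (∀ p1 p2 p c, G.IsComp p1 p2 p → G.IsComp (F p1) (F p2) c → S (F p) c)

/-- An isomorphism of the `k`-graphs determined by two factorization rules on the same
colored graph, given by a vertex bijection `θV` and a map on paths `θP`. -/
def IsoOfRules {k : ℕ} (G : ColoredGraph k) (R S : G.FactRule)
    (θV : G.V → G.V) (θP : G.Pth → G.Pth) : Prop :=
  Function.Bijective θV ∧
  (∀ p, (θP p).s = θV p.s ∧ (θP p).r = θV p.r ∧ (θP p).colors = p.colors) ∧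
  (∀ p p', R.rel p p' ↔ S.rel (θP p) (θP p')) ∧
  (∀ q, ∃ p, S.rel (θP p) q) ∧
  (∀ p1 p2 p c, G.IsComp p1 p2 p → G.IsComp (θP p1) (θP p2) c → S.rel (θP p) c)

/-- `S` is the product factorization rule of `Λ = (G₁, rLam)` and `Γ = (G₂, rGam)`: its
slices are given by the factor rules and both Zappa–Szép actions are trivial. -/
def IsProductRule (G₁ : ColoredGraph k₁) (G₂ : ColoredGraph k₂)
    (rLam : G₁.FactRule) (rGam : G₂.FactRule) (S : (prodG G₁ G₂).FactRule) : Prop :=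
  (∀ (w : G₂.V) (p p' : G₁.Pth), rLam.rel p p' ↔ S.rel (lift₁ w p) (lift₁ w p')) ∧
  (∀ (x : G₁.V) (q q' : G₂.Pth), rGam.rel q q' ↔ S.rel (lift₂ x q) (lift₂ x q')) ∧
  (∀ (p : G₁.Pth) (q q' : G₂.Pth) (p' : G₁.Pth),
    ActsTo S p q q' p' → q' = q ∧ p' = p)


section StmtAux

open ColoredGraph

variable {G₁ : ColoredGraph k₁} {G₂ : ColoredGraph k₂}

lemma constOfReflTrans {α β : Type*} {r : α → α → Prop} {g : α → β}
    (hg : ∀ a b, r a b → g a = g b) {a b : α}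
    (h : Relation.ReflTransGen r a b) : g a = g b := by
  induction h with
  | refl => rfl
  | tail _ hstep ih => exact ih.trans (hg _ _ hstep)

lemma Pth_ext' {k : ℕ} {G : ColoredGraph k} {p q : G.Pth}
    (h1 : p.base = q.base) (h2 : p.edges = q.edges) : p = q := by
  cases p; cases q; simp_all

lemma edges_aux₂ (b1 : G₁.V) :
    ∀ l : List (prodG G₁ G₂).E,
      l.Chain' (fun e f => (prodG G₁ G₂).es e = (prodG G₁ G₂).er f) →
      (∀ e ∈ l.getLast?, ((prodG G₁ G₂).es e).1 = b1) →
      (∀ e ∈ l, k₁ ≤ ((prodG G₁ G₂).color e).val) →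
      ∃ L : List G₂.E, l = L.map (fun f => Sum.inr (b1, f)) := by
  intro l
  induction l with
  | nil => exact fun _ _ _ => ⟨[], rfl⟩
  | cons e rest ih =>
    intro hch hlast hcol
    obtain ⟨a, w⟩ | ⟨v, f⟩ := e
    · exfalso
      have h1 := hcol _ List.mem_cons_self
      have h2 : ((prodG G₁ G₂).color (Sum.inl (a, w))).val = (G₁.color a).val := rfl
      rw [h2] at h1
      exact absurd h1 (Nat.not_le.mpr (G₁.color a).isLt)
    · have hv : v = b1 := by
        match rest, hch, hlast with
        | [], _, hlast =>
          exact hlast (Sum.inr (v, f)) rfl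
        | f0 :: t, hch, hlast =>
          have hstep : (prodG G₁ G₂).es (Sum.inr (v, f)) = (prodG G₁ G₂).er f0 :=
            (List.isChain_cons_cons.mp hch).1
          obtain ⟨b, w'⟩ | ⟨v', g⟩ := f0
          · exfalso
            have h1 := hcol _ (List.mem_cons_of_mem _ List.mem_cons_self)
            have h2 : ((prodG G₁ G₂).color (Sum.inl (b, w'))).val = (G₁.color b).val := rfl
            rw [h2] at h1
            exact absurd h1 (Nat.not_le.mpr (G₁.color b).isLt)
          · -- v' = b1 from IH, and v = v' from hstep
            obtain ⟨L, hL⟩ := ih (List.isChain_cons_cons.mp hch).2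
              (by intro x hx; exact hlast x (by exact hx))
              (fun x hx => hcol x (List.mem_cons_of_mem _ hx))
            have hv' : v' = b1 := by
              cases L with
              | nil => simp at hL
              | cons g0 L' =>
                have := List.head_eq_of_cons_eq hL
                have h3 := congrArg (fun s => match s with
                  | Sum.inl (_, _) => b1
                  | Sum.inr (p : G₁.V × G₂.E) => p.1) this
                exact h3
            have : v = v' := congrArg Prod.fst hstep
            rw [this, hv']
      subst hv
      obtain ⟨L, hL⟩ := ih hch.tail
        (by
          intro x hx
          cases rest with
          | nil => simp at hx
          | cons f0 t => exact hlast x (by exact hx))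
        (fun x hx => hcol x (List.mem_cons_of_mem _ hx))
      exact ⟨f :: L, by rw [List.map_cons, ← hL]; rfl⟩

lemma edges_aux₁ (b2 : G₂.V) :
    ∀ l : List (prodG G₁ G₂).E,
      l.Chain' (fun e f => (prodG G₁ G₂).es e = (prodG G₁ G₂).er f) →
      (∀ e ∈ l.getLast?, ((prodG G₁ G₂).es e).2 = b2) →
      (∀ e ∈ l, ((prodG G₁ G₂).color e).val < k₁) →
      ∃ L : List G₁.E, l = L.map (fun e => Sum.inl (e, b2)) := by
  intro l
  induction l with
  | nil => exact fun _ _ _ => ⟨[], rfl⟩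
  | cons e rest ih =>
    intro hch hlast hcol
    obtain ⟨a, w⟩ | ⟨v, f⟩ := e
    · have hw : w = b2 := by
        match rest, hch, hlast with
        | [], _, hlast => exact hlast (Sum.inl (a, w)) rfl
        | f0 :: t, hch, hlast =>
          have hstep : (prodG G₁ G₂).es (Sum.inl (a, w)) = (prodG G₁ G₂).er f0 :=
            (List.isChain_cons_cons.mp hch).1
          obtain ⟨b, w'⟩ | ⟨v', g⟩ := f0
          · obtain ⟨L, hL⟩ := ih (List.isChain_cons_cons.mp hch).2
              (by intro x hx; exact hlast x (by exact hx))
              (fun x hx => hcol x (List.mem_cons_of_mem _ hx))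
            have hw' : w' = b2 := by
              cases L with
              | nil => simp at hL
              | cons g0 L' =>
                have := List.head_eq_of_cons_eq hL
                have h3 := congrArg (fun s => match s with
                  | Sum.inl (p : G₁.E × G₂.V) => p.2
                  | Sum.inr (_, _) => b2) this
                exact h3
            have : w = w' := congrArg Prod.snd hstep
            rw [this, hw']
          · exfalso
            have h1 := hcol _ (List.mem_cons_of_mem _ List.mem_cons_self)
            have h2 : ((prodG G₁ G₂).color (Sum.inr (v', g))).val = k₁ + (G₂.color g).val := rfl
            rw [h2] at h1
            omega
      subst hw
      obtain ⟨L, hL⟩ := ih hch.tail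
        (by
          intro x hx
          cases rest with
          | nil => simp at hx
          | cons f0 t => exact hlast x (by exact hx))
        (fun x hx => hcol x (List.mem_cons_of_mem _ hx))
      exact ⟨a :: L, by rw [List.map_cons, ← hL]; rfl⟩
    · exfalso
      have h1 := hcol _ List.mem_cons_self
      have h2 : ((prodG G₁ G₂).color (Sum.inr (v, f))).val = k₁ + (G₂.color f).val := rfl
      rw [h2] at h1
      omega

lemma slice₂ (P : (prodG G₁ G₂).Pth)
    (h : ∀ c ∈ P.colors, k₁ ≤ c.val) :
    ∃ q2 : G₂.Pth, P = lift₂ P.base.1 q2 := by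
  have hcol : ∀ e ∈ P.edges, k₁ ≤ ((prodG G₁ G₂).color e).val := fun e he =>
    h _ (List.mem_map_of_mem he)
  have hlast : ∀ e ∈ P.edges.getLast?, ((prodG G₁ G₂).es e).1 = P.base.1 := by
    intro e he; rw [P.base_src e he]
  obtain ⟨L, hL⟩ := edges_aux₂ P.base.1 P.edges P.chain hlast hcol
  refine ⟨⟨P.base.2, L, ?_, ?_⟩, ?_⟩
  · have hc := P.chain
    rw [hL] at hc; replace hc := (List.isChain_map ..).mp hc
    refine hc.imp ?_
    intro a b hab
    exact congrArg Prod.snd hab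
  · intro f hf
    have hmem : (Sum.inr (P.base.1, f) : (prodG G₁ G₂).E) ∈ P.edges.getLast? := by
      rw [hL]
      exact List.getLast?_map.trans (Option.map_eq_some_iff.mpr ⟨f, hf, rfl⟩)
    exact congrArg Prod.snd (P.base_src _ hmem)
  · exact Pth_ext' rfl hL

lemma slice₁ (P : (prodG G₁ G₂).Pth)
    (h : ∀ c ∈ P.colors, c.val < k₁) :
    ∃ p2 : G₁.Pth, P = lift₁ P.base.2 p2 := by
  have hcol : ∀ e ∈ P.edges, ((prodG G₁ G₂).color e).val < k₁ := fun e he =>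
    h _ (List.mem_map_of_mem he)
  have hlast : ∀ e ∈ P.edges.getLast?, ((prodG G₁ G₂).es e).2 = P.base.2 := by
    intro e he; rw [P.base_src e he]
  obtain ⟨L, hL⟩ := edges_aux₁ P.base.2 P.edges P.chain hlast hcol
  refine ⟨⟨P.base.1, L, ?_, ?_⟩, ?_⟩
  · have hc := P.chain
    rw [hL] at hc; replace hc := (List.isChain_map ..).mp hc
    refine hc.imp ?_
    intro a b hab
    exact congrArg Prod.fst hab
  · intro f hf
    have hmem : (Sum.inl (f, P.base.2) : (prodG G₁ G₂).E) ∈ P.edges.getLast? := by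
      rw [hL]
      exact List.getLast?_map.trans (Option.map_eq_some_iff.mpr ⟨f, hf, rfl⟩)
    exact congrArg Prod.fst (P.base_src _ hmem)
  · exact Pth_ext' rfl hL

/-- single-edge path in a colored graph -/
def singlePth {k : ℕ} (G : ColoredGraph k) (f : G.E) : G.Pth where
  base := G.es f
  edges := [f]
  chain := List.isChain_singleton f
  base_src := by
    intro e he
    simp only [List.getLast?_singleton, Option.mem_def, Option.some.injEq] at he
    rw [he]

lemma step₂ {θV : (prodG G₁ G₂).V → (prodG G₁ G₂).V}
    {θP : (prodG G₁ G₂).Pth → (prodG G₁ G₂).Pth}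
    (hsrc : ∀ p : (prodG G₁ G₂).Pth,
      (θP p).s = θV p.s ∧ (θP p).r = θV p.r ∧ (θP p).colors = p.colors)
    (x : G₁.V) (f : G₂.E) :
    (θV (x, G₂.es f)).1 = (θV (x, G₂.er f)).1 := by
  set P := θP (lift₂ x (singlePth G₂ f)) with hP
  obtain ⟨hs, hr, hcolors⟩ := hsrc (lift₂ x (singlePth G₂ f))
  have hcol : P.colors = [Fin.natAdd k₁ (G₂.color f)] := hcolors
  obtain ⟨e, hedges⟩ : ∃ e, P.edges = [e] := by
    rcases he : P.edges with _ | ⟨e, t⟩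
    · rw [Pth.colors, he] at hcol; simp at hcol
    · rw [Pth.colors, he, List.map_cons] at hcol
      simp only [List.cons.injEq, List.map_eq_nil_iff] at hcol
      exact ⟨e, by rw [hcol.2]⟩
  obtain ⟨a, w⟩ | ⟨v, g⟩ := e
  · exfalso
    rw [Pth.colors, hedges] at hcol
    have h1 : ((prodG G₁ G₂).color (Sum.inl (a, w))).val =
        (Fin.natAdd k₁ (G₂.color f)).val := by
      change _ :: _ = _ at hcol
      exact congrArg Fin.val (List.head_eq_of_cons_eq hcol)
    have h2 : (G₁.color a).val = k₁ + (G₂.color f).val := h1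
    have := (G₁.color a).isLt
    omega
  · have hbase : P.base = θV (x, G₂.es f) := hs
    have h1 : (prodG G₁ G₂).es (Sum.inr (v, g)) = P.base :=
      P.base_src _ (by rw [hedges]; rfl)
    have hv1 : v = (θV (x, G₂.es f)).1 := by
      rw [← hbase]; exact congrArg Prod.fst h1
    have hrr : P.r = θV (x, G₂.er f) := hr
    have h2 : P.r = (prodG G₁ G₂).er (Sum.inr (v, g)) := by
      rw [Pth.r, hedges]; rfl
    have hv2 : v = (θV (x, G₂.er f)).1 := by
      rw [← hrr, h2]; rfl
    rw [← hv1, ← hv2]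

lemma step₁ {θV : (prodG G₁ G₂).V → (prodG G₁ G₂).V}
    {θP : (prodG G₁ G₂).Pth → (prodG G₁ G₂).Pth}
    (hsrc : ∀ p : (prodG G₁ G₂).Pth,
      (θP p).s = θV p.s ∧ (θP p).r = θV p.r ∧ (θP p).colors = p.colors)
    (w : G₂.V) (f : G₁.E) :
    (θV (G₁.es f, w)).2 = (θV (G₁.er f, w)).2 := by
  set P := θP (lift₁ w (singlePth G₁ f)) with hP
  obtain ⟨hs, hr, hcolors⟩ := hsrc (lift₁ w (singlePth G₁ f))
  have hcol : P.colors = [Fin.castAdd k₂ (G₁.color f)] := hcolors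
  obtain ⟨e, hedges⟩ : ∃ e, P.edges = [e] := by
    rcases he : P.edges with _ | ⟨e, t⟩
    · rw [Pth.colors, he] at hcol; simp at hcol
    · rw [Pth.colors, he, List.map_cons] at hcol
      simp only [List.cons.injEq, List.map_eq_nil_iff] at hcol
      exact ⟨e, by rw [hcol.2]⟩
  obtain ⟨a, u⟩ | ⟨v, g⟩ := e
  · have hbase : P.base = θV (G₁.es f, w) := hs
    have h1 : (prodG G₁ G₂).es (Sum.inl (a, u)) = P.base :=
      P.base_src _ (by rw [hedges]; rfl)
    have hv1 : u = (θV (G₁.es f, w)).2 := by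
      rw [← hbase]; exact congrArg Prod.snd h1
    have hrr : P.r = θV (G₁.er f, w) := hr
    have h2 : P.r = (prodG G₁ G₂).er (Sum.inl (a, u)) := by
      rw [Pth.r, hedges]; rfl
    have hv2 : u = (θV (G₁.er f, w)).2 := by
      rw [← hrr, h2]; rfl
    rw [← hv1, ← hv2]
  · exfalso
    rw [Pth.colors, hedges] at hcol
    have h1 : ((prodG G₁ G₂).color (Sum.inr (v, g))).val =
        (Fin.castAdd k₂ (G₁.color f)).val := by
      change _ :: _ = _ at hcol
      exact congrArg Fin.val (List.head_eq_of_cons_eq hcol)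
    have h2 : k₁ + (G₂.color g).val = (G₁.color f).val := h1
    have := (G₁.color f).isLt
    omega

end StmtAux

open ColoredGraph in
/-- Let `Ω` be a quasi-product with connected quasi-factors `Λ` and `Γ`,
and suppose `θ = (θV, θP) : Ω → Λ × Γ` is a `k`-graph isomorphism onto the product
`k`-graph (given by a product factorization rule `S`). Then `θ` maps each component
`Ω₂^x` into `{y} × Γ` for a single `y ∈ Λ⁰`, and each component `Ω₁^w` into `Λ × {z}`
for a single `z ∈ Γ⁰`. -/
theorem stmt17 {k₁ k₂ : ℕ} (Q : QuasiProduct k₁ k₂)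
    (hc₁ : Connected Q.G₁) (hc₂ : Connected Q.G₂)
    (S : (prodG Q.G₁ Q.G₂).FactRule)
    (hS : IsProductRule Q.G₁ Q.G₂ Q.rLam Q.rGam S)
    (θV : (prodG Q.G₁ Q.G₂).V → (prodG Q.G₁ Q.G₂).V)
    (θP : (prodG Q.G₁ Q.G₂).Pth → (prodG Q.G₁ Q.G₂).Pth)
    (hθ : IsoOfRules (prodG Q.G₁ Q.G₂) Q.rOmega S θV θP) :
    (∀ x : Q.G₁.V, ∃ y : Q.G₁.V, ∀ q : Q.G₂.Pth, ∃ q2 : Q.G₂.Pth,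
      S.rel (θP (lift₂ x q)) (lift₂ y q2)) ∧
    (∀ w : Q.G₂.V, ∃ z : Q.G₂.V, ∀ p : Q.G₁.Pth, ∃ p2 : Q.G₁.Pth,
      S.rel (θP (lift₁ w p)) (lift₁ z p2)) := by
  obtain ⟨hbij, hsrc, hrel, hsurj, hcomp⟩ := hθ
  constructor
  · intro x
    refine ⟨(θV (x, Q.base₂)).1, fun q => ?_⟩
    have hconst : ∀ u : Q.G₂.V, (θV (x, u)).1 = (θV (x, Q.base₂)).1 := by
      intro u
      refine constOfReflTrans (g := fun u => (θV (x, u)).1) ?_ (hc₂ u Q.base₂)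
      rintro a b ⟨f, ⟨h1, h2⟩ | ⟨h1, h2⟩⟩
      · rw [← h1, ← h2]; exact step₂ hsrc x f
      · rw [← h1, ← h2]; exact (step₂ hsrc x f).symm
    set P := θP (lift₂ x q) with hP
    have hall : ∀ c ∈ P.colors, k₁ ≤ c.val := by
      have hc : P.colors = (lift₂ x q).colors := (hsrc _).2.2
      rw [hc]
      intro c hc'
      simp only [Pth.colors, lift₂, List.map_map, List.mem_map] at hc'
      obtain ⟨f0, hf0, rfl⟩ := hc'
      obtain ⟨f, _, rfl⟩ := List.mem_map.mp hf0
      exact Nat.le_add_right _ _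
    obtain ⟨q2, hq2⟩ := slice₂ P hall
    have hbase : P.base = θV (x, q.base) := (hsrc (lift₂ x q)).1
    have hb1 : P.base.1 = (θV (x, Q.base₂)).1 := by
      rw [hbase]; exact hconst q.base
    refine ⟨q2, ?_⟩
    have : P = lift₂ (θV (x, Q.base₂)).1 q2 := by rw [← hb1]; exact hq2
    rw [← this]
    exact S.iseqv.refl P
  · intro w
    refine ⟨(θV (Q.base₁, w)).2, fun p => ?_⟩
    have hconst : ∀ u : Q.G₁.V, (θV (u, w)).2 = (θV (Q.base₁, w)).2 := by
      intro u
      refine constOfReflTrans (g := fun u => (θV (u, w)).2) ?_ (hc₁ u Q.base₁)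
      rintro a b ⟨f, ⟨h1, h2⟩ | ⟨h1, h2⟩⟩
      · rw [← h1, ← h2]; exact step₁ hsrc w f
      · rw [← h1, ← h2]; exact (step₁ hsrc w f).symm
    set P := θP (lift₁ w p) with hP
    have hall : ∀ c ∈ P.colors, c.val < k₁ := by
      have hc : P.colors = (lift₁ w p).colors := (hsrc _).2.2
      rw [hc]
      intro c hc'
      simp only [Pth.colors, lift₁, List.map_map, List.mem_map] at hc'
      obtain ⟨f0, hf0, rfl⟩ := hc'
      obtain ⟨f, _, rfl⟩ := List.mem_map.mp hf0
      exact (Q.G₁.color f).isLt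
    obtain ⟨p2, hp2⟩ := slice₁ P hall
    have hbase : P.base = θV (p.base, w) := (hsrc (lift₁ w p)).1
    have hb2 : P.base.2 = (θV (Q.base₁, w)).2 := by
      rw [hbase]; exact hconst p.base
    refine ⟨p2, ?_⟩
    have : P = lift₁ (θV (Q.base₁, w)).2 p2 := by rw [← hb2]; exact hp2
    rw [← this]
    exact S.iseqv.refl P
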